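/- Let G be a soluble group which is not finitely generated and such that G ≠ ⟨K, L⟩ for any proper subgroups K, L of G. Then the abelianization G/[G,G] is a quasicyclic p-group for some prime p. -/

import Mathlib

/-- The Prüfer `p`-group, modelled as the `p`-primary component of `ℚ/ℤ`. -/
def PruferSubgroup (p : ℕ) : AddSubgroup (AddCircle (1 : ℚ)) where
  carrier := {x | ∃ n : ℕ, (p ^ n : ℕ) • x = 0}
  zero_mem' := ⟨0, smul_zero _⟩
  add_mem' := by
    rintro a b ⟨m, hm⟩ ⟨k, hk⟩
    refine ⟨m + k, ?_⟩
    have ha : (p ^ (m + k) : ℕ) • a = 0 := by rw [add_comm, pow_add, mul_smul, hm, smul_zero]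
    have hb : (p ^ (m + k) : ℕ) • b = 0 := by rw [pow_add, mul_smul, hk, smul_zero]
    rw [smul_add, ha, hb, add_zero]
  neg_mem' := by
    rintro a ⟨m, hm⟩
    exact ⟨m, by rw [smul_neg, hm, neg_zero]⟩

abbrev PruferGroup (p : ℕ) : Type := ↥(PruferSubgroup p)

section AbelianCore
variable {A : Type*} [AddCommGroup A]

lemma zmultiples_le' {a : A} {K : AddSubgroup A} (ha : a ∈ K) :
    AddSubgroup.zmultiples a ≤ K := by
  rintro x hx
  obtain ⟨k, rfl⟩ := AddSubgroup.mem_zmultiples_iff.mp hx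
  exact K.zsmul_mem ha k

lemma div_by_prime (hnc : ∀ a : A, AddSubgroup.zmultiples a ≠ ⊤)
    (hA : ∀ K L : AddSubgroup A, K ≠ ⊤ → L ≠ ⊤ → K ⊔ L ≠ ⊤)
    {p : ℕ} (hp : p.Prime) (x : A) : ∃ y : A, (p : ℤ) • y = x := by
  by_contra hx
  push_neg at hx
  set P : AddSubgroup A :=
    { carrier := {a | ∃ y, (p : ℤ) • y = a}
      zero_mem' := ⟨0, smul_zero _⟩
      add_mem' := by rintro a b ⟨y, rfl⟩ ⟨z, rfl⟩; exact ⟨y + z, by rw [smul_add]⟩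
      neg_mem' := by rintro a ⟨y, rfl⟩; exact ⟨-y, by rw [smul_neg]⟩ } with hPdef
  have hxP : x ∉ P := fun hmem => by
    obtain ⟨y, hy⟩ := hmem
    exact hx y hy
  obtain ⟨M, -, hM⟩ := zorn_le_nonempty₀ {M : AddSubgroup A | P ≤ M ∧ x ∉ M}
    (fun c hcs hchain y hy => by
      refine ⟨sSup c, ⟨le_trans (hcs hy).1 (le_sSup hy), ?_⟩, fun z hz => le_sSup hz⟩
      intro hmem
      rw [AddSubgroup.mem_sSup_of_directedOn ⟨y, hy⟩ hchain.directedOn] at hmem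
      obtain ⟨N, hNc, hxN⟩ := hmem
      exact (hcs hNc).2 hxN) P ⟨le_rfl, hxP⟩
  obtain ⟨hPM, hxM⟩ := hM.prop
  have hMne : M ≠ ⊤ := fun htop => hxM (htop ▸ AddSubgroup.mem_top x)
  apply hA M (AddSubgroup.zmultiples x) hMne (hnc x)
  rw [AddSubgroup.eq_top_iff']
  intro a
  by_cases haM : a ∈ M
  · exact AddSubgroup.mem_sup_left haM
  have hxa : x ∈ M ⊔ AddSubgroup.zmultiples a := by
    by_contra hxa
    have h1 : M ⊔ AddSubgroup.zmultiples a ∈ {M : AddSubgroup A | P ≤ M ∧ x ∉ M} :=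
      ⟨le_trans hPM le_sup_left, hxa⟩
    exact haM (hM.2 h1 le_sup_left (AddSubgroup.mem_sup_right (AddSubgroup.mem_zmultiples a)))
  obtain ⟨m, hm, z, hz, hmk⟩ := AddSubgroup.mem_sup.mp hxa
  obtain ⟨k, rfl⟩ := AddSubgroup.mem_zmultiples_iff.mp hz
  -- hmk : m + k • a = x
  have hpk : ¬ (p : ℤ) ∣ k := by
    rintro ⟨c, rfl⟩
    apply hxM
    rw [← hmk]
    refine M.add_mem hm (hPM ?_)
    exact ⟨c • a, by rw [← mul_smul]⟩
  have hcop : IsCoprime (p : ℤ) k := by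
    rw [Int.isCoprime_iff_gcd_eq_one]
    have : ¬ p ∣ k.natAbs := fun hd => hpk (Int.natCast_dvd.mpr hd)
    exact (Nat.Prime.coprime_iff_not_dvd hp).2 this
  obtain ⟨u, v, huv⟩ := hcop
  have key : a = u • ((p:ℤ) • a) + v • (k • a) := by
    rw [smul_smul, smul_smul, ← add_smul, huv, one_smul]
  have hka : k • a = x - m := by rw [← hmk]; abel
  rw [key, hka]
  have h1 : u • ((p:ℤ) • a) ∈ M := hPM ⟨u • a, by rw [smul_smul, smul_smul, mul_comm]⟩
  have h2 : v • (x - m) = v • x - v • m := smul_sub v x m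
  rw [h2]
  have h3 : v • m ∈ M := M.zsmul_mem hm v
  have h4 : v • x ∈ AddSubgroup.zmultiples x := AddSubgroup.zsmul_mem _ (AddSubgroup.mem_zmultiples x) v
  exact AddSubgroup.add_mem _ (AddSubgroup.mem_sup_left h1)
    (AddSubgroup.sub_mem _ (AddSubgroup.mem_sup_right h4) (AddSubgroup.mem_sup_left h3))

end AbelianCore

section Core2
variable {A : Type*} [AddCommGroup A]

lemma div_by_nat (hdivp : ∀ {p : ℕ}, p.Prime → ∀ x : A, ∃ y : A, (p : ℤ) • y = x) :
    ∀ n : ℕ, n ≠ 0 → ∀ x : A, ∃ y : A, (n : ℤ) • y = x := by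
  intro n
  induction n using Nat.strong_induction_on with
  | _ n ih =>
    intro hn x
    rcases eq_or_ne n 1 with rfl | hn1
    · exact ⟨x, one_smul _ _⟩
    have hq : n.minFac.Prime := Nat.minFac_prime hn1
    have hd : n.minFac ∣ n := Nat.minFac_dvd n
    obtain ⟨m, hm⟩ := hd
    have hm0 : m ≠ 0 := by rintro rfl; simp at hm; exact hn hm
    have hmlt : m < n := by
      rw [hm]
      exact lt_mul_of_one_lt_left (Nat.pos_of_ne_zero hm0) hq.one_lt
    obtain ⟨y1, hy1⟩ := ih m hmlt hm0 x
    obtain ⟨y2, hy2⟩ := hdivp hq y1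
    refine ⟨y2, ?_⟩
    rw [hm]
    push_cast
    rw [mul_comm, mul_smul, hy2, hy1]

lemma div_by_int (hdivp : ∀ {p : ℕ}, p.Prime → ∀ x : A, ∃ y : A, (p : ℤ) • y = x)
    (z : ℤ) (hz : z ≠ 0) (x : A) : ∃ y : A, z • y = x := by
  rcases Int.natAbs_eq z with hz' | hz'
  · obtain ⟨y, hy⟩ := div_by_nat hdivp z.natAbs (by simpa using hz) x
    exact ⟨y, by rw [hz']; exact hy⟩
  · obtain ⟨y, hy⟩ := div_by_nat hdivp z.natAbs (by simpa using hz) x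
    exact ⟨-y, by rw [hz', neg_smul, smul_neg, neg_neg]; exact hy⟩

/-- A nontrivial divisible subgroup is the whole group, under the join condition. -/
lemma divisible_subgroup_eq_top
    (hA : ∀ K L : AddSubgroup A, K ≠ ⊤ → L ≠ ⊤ → K ⊔ L ≠ ⊤)
    (D : AddSubgroup A)
    (hdiv : ∀ z : ℤ, z ≠ 0 → ∀ a ∈ D, ∃ b ∈ D, z • b = a)
    (hD : D ≠ ⊥) : D = ⊤ := by
  by_contra hDtop
  haveI : DivisibleBy ↥D ℤ :=
    { div := fun a z => if h : z = 0 then 0 else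
        ⟨(hdiv z h a.1 a.2).choose, (hdiv z h a.1 a.2).choose_spec.1⟩
      div_zero := fun a => by simp
      div_cancel := fun {z} a hz => by
        apply Subtype.ext
        show (z • (if h : z = 0 then (0:↥D) else
          ⟨(hdiv z h a.1 a.2).choose, (hdiv z h a.1 a.2).choose_spec.1⟩) : ↥D).1 = a.1
        rw [dif_neg hz, AddSubgroup.coe_zsmul]
        exact (hdiv z hz a.1 a.2).choose_spec.2 }
  obtain ⟨r, hr⟩ := (Module.Baer.of_divisible ↥D).extension_property_addMonoidHom
    D.subtype Subtype.coe_injective (AddMonoidHom.id ↥D)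
  have hretr : ∀ d : ↥D, r d.1 = d := fun d => by
    have := DFunLike.congr_fun hr d
    simpa using this
  obtain ⟨d, hdD, hd0⟩ : ∃ d ∈ D, d ≠ 0 := by
    by_contra hc
    push_neg at hc
    exact hD ((AddSubgroup.eq_bot_iff_forall D).mpr hc)
  have hker : r.ker ≠ ⊤ := by
    intro htop
    have : d ∈ r.ker := htop ▸ AddSubgroup.mem_top d
    rw [AddMonoidHom.mem_ker, hretr ⟨d, hdD⟩] at this
    exact hd0 (congrArg Subtype.val this)
  apply hA D r.ker hDtop hker
  rw [AddSubgroup.eq_top_iff']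
  intro a
  have h1 : (r a : A) ∈ D := (r a).2
  have h2 : a - (r a : A) ∈ r.ker := by
    rw [AddMonoidHom.mem_ker, map_sub, hretr (r a), sub_self]
  have : (r a : A) + (a - (r a : A)) = a := by abel
  exact this ▸ AddSubgroup.add_mem _ (AddSubgroup.mem_sup_left h1) (AddSubgroup.mem_sup_right h2)

end Core2

section Chains
variable {B : Type*} [AddCommGroup B] {C : Type*} [AddCommGroup C] {p : ℕ}

lemma chain_pow {v : ℕ → B} (hv : ∀ n, (p : ℤ) • v (n + 1) = v n) (n d : ℕ) :
    (p : ℤ) ^ d • v (n + d) = v n := by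
  induction d with
  | zero => simp
  | succ d ih =>
    rw [pow_succ, mul_smul, show n + (d + 1) = (n + d) + 1 from rfl, hv (n + d), ih]

lemma chain_pow' {v : ℕ → B} (hv : ∀ n, (p : ℤ) • v (n + 1) = v n) {n N : ℕ} (h : n ≤ N) :
    (p : ℤ) ^ (N - n) • v N = v n := by
  have hn : n + (N - n) = N := by omega
  have := chain_pow hv n (N - n)
  rwa [hn] at this

lemma prufer_transfer (v : ℕ → B) (w : ℕ → C)
    (hv : ∀ n, (p : ℤ) • v (n + 1) = v n) (hw : ∀ n, (p : ℤ) • w (n + 1) = w n)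
    (ov : ∀ n (k : ℤ), k • v n = 0 ↔ ((p : ℤ)) ^ (n + 1) ∣ k)
    (ow : ∀ n (k : ℤ), k • w n = 0 ↔ ((p : ℤ)) ^ (n + 1) ∣ k)
    (tv : ∀ b : B, ∃ n, ∃ k : ℤ, k • v n = b)
    (tw : ∀ c : C, ∃ n, ∃ k : ℤ, k • w n = c) :
    Nonempty (B ≃+ C) := by
  classical
  have key : ∀ n m (k l : ℤ), k • v n = l • v m → k • w n = l • w m := by
    intro n m k l hvk
    set N := max n m with hN
    have hnN : n ≤ N := le_max_left n m
    have hmN : m ≤ N := le_max_right n m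
    have e1 : k • v n = (k * (p : ℤ) ^ (N - n)) • v N := by
      rw [mul_smul, chain_pow' hv hnN]
    have e2 : l • v m = (l * (p : ℤ) ^ (N - m)) • v N := by
      rw [mul_smul, chain_pow' hv hmN]
    have e0 : (k * (p : ℤ) ^ (N - n) - l * (p : ℤ) ^ (N - m)) • v N = 0 := by
      rw [sub_smul, ← e1, ← e2, hvk, sub_self]
    have hdvd := (ov N _).mp e0
    have e0' : (k * (p : ℤ) ^ (N - n) - l * (p : ℤ) ^ (N - m)) • w N = 0 := (ow N _).mpr hdvd
    have e1' : k • w n = (k * (p : ℤ) ^ (N - n)) • w N := by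
      rw [mul_smul, chain_pow' hw hnN]
    have e2' : l • w m = (l * (p : ℤ) ^ (N - m)) • w N := by
      rw [mul_smul, chain_pow' hw hmN]
    rw [e1', e2']
    rw [sub_smul] at e0'
    exact sub_eq_zero.mp e0'
  let f : B → C := fun b => (tv b).choose_spec.choose • w (tv b).choose
  have f_spec : ∀ (b : B) (n : ℕ) (k : ℤ), k • v n = b → f b = k • w n := by
    intro b n k hk
    exact key _ _ _ _ ((tv b).choose_spec.choose_spec.trans hk.symm)
  have fadd : ∀ a b : B, f (a + b) = f a + f b := by
    intro a b
    obtain ⟨n, k, hk⟩ := tv a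
    obtain ⟨m, l, hl⟩ := tv b
    set N := max n m with hN
    have hnN : n ≤ N := le_max_left n m
    have hmN : m ≤ N := le_max_right n m
    have e1 : (k * (p : ℤ) ^ (N - n)) • v N = a := by rw [mul_smul, chain_pow' hv hnN, hk]
    have e2 : (l * (p : ℤ) ^ (N - m)) • v N = b := by rw [mul_smul, chain_pow' hv hmN, hl]
    have e3 : (k * (p : ℤ) ^ (N - n) + l * (p : ℤ) ^ (N - m)) • v N = a + b := by
      rw [add_smul, e1, e2]
    rw [f_spec _ _ _ e3, f_spec _ _ _ hk, f_spec _ _ _ hl, add_smul,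
      mul_smul, mul_smul, chain_pow' hw hnN, chain_pow' hw hmN]
  let F : B →+ C := AddMonoidHom.mk' f fadd
  have hinj : Function.Injective F := by
    rw [injective_iff_map_eq_zero]
    intro a ha
    obtain ⟨n, k, hk⟩ := tv a
    have : f a = k • w n := f_spec _ _ _ hk
    have h0 : k • w n = 0 := by rw [← this]; exact ha
    have := (ov n k).mpr ((ow n k).mp h0)
    rw [hk] at this
    exact this
  have hsurj : Function.Surjective F := by
    intro c
    obtain ⟨n, k, hk⟩ := tw c
    exact ⟨k • v n, (f_spec _ _ _ rfl).trans hk⟩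
  exact ⟨AddEquiv.ofBijective F ⟨hinj, hsurj⟩⟩

end Chains

section Prufer
variable {p : ℕ}

lemma prufer_coe_mem (hp : p ≠ 0) (n : ℕ) :
    ((((p : ℚ) ^ n)⁻¹ : ℚ) : AddCircle (1 : ℚ)) ∈ PruferSubgroup p := by
  refine ⟨n, ?_⟩
  have hps : ((p : ℚ) ^ n) ≠ 0 := by
    exact pow_ne_zero n (Nat.cast_ne_zero.mpr hp)
  rw [← AddCircle.coe_nsmul]
  have : (p ^ n : ℕ) • (((p : ℚ) ^ n)⁻¹ : ℚ) = 1 := by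
    rw [nsmul_eq_mul]
    push_cast
    field_simp
  rw [this]
  exact AddCircle.coe_period (1 : ℚ)

/-- The canonical generators of the Prüfer group. -/
noncomputable def pruferGen (p : ℕ) (hp : p ≠ 0) (n : ℕ) : PruferGroup p :=
  ⟨((((p : ℚ) ^ (n + 1))⁻¹ : ℚ) : AddCircle (1 : ℚ)), prufer_coe_mem hp (n + 1)⟩

lemma pruferGen_chain (hp : p ≠ 0) (n : ℕ) :
    (p : ℤ) • pruferGen p hp (n + 1) = pruferGen p hp n := by
  apply Subtype.ext
  rw [AddSubgroup.coe_zsmul]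
  show (p : ℤ) • (((((p : ℚ) ^ (n + 2))⁻¹ : ℚ) : AddCircle (1 : ℚ))) = _
  rw [← AddCircle.coe_zsmul]
  congr 1
  rw [zsmul_eq_mul]
  push_cast
  rw [pow_succ]
  have h1 : (p : ℚ) ≠ 0 := Nat.cast_ne_zero.mpr hp
  field_simp
end Prufer

section Prufer2
variable {p : ℕ}

lemma pruferGen_zsmul_eq_zero_iff (hp : p ≠ 0) (n : ℕ) (k : ℤ) :
    k • pruferGen p hp n = 0 ↔ ((p : ℤ)) ^ (n + 1) ∣ k := by
  have hps : ((p : ℚ) ^ (n + 1)) ≠ 0 := pow_ne_zero _ (Nat.cast_ne_zero.mpr hp)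
  rw [Subtype.ext_iff]
  have hcoe : ((k • pruferGen p hp n : PruferGroup p) : AddCircle (1 : ℚ))
      = ((↑(k • ((((p : ℚ) ^ (n + 1))⁻¹) : ℚ)) : AddCircle (1 : ℚ))) := by
    rw [AddSubgroup.coe_zsmul, AddCircle.coe_zsmul]
    rfl
  rw [hcoe]
  show (↑(k • ((((p : ℚ) ^ (n + 1))⁻¹) : ℚ)) : AddCircle (1 : ℚ)) = 0 ↔ _
  rw [AddCircle.coe_eq_zero_iff]
  constructor
  · rintro ⟨m, hm⟩
    refine ⟨m, ?_⟩
    rw [zsmul_eq_mul, zsmul_eq_mul, mul_one] at hm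
    have hq : (m : ℚ) * (p : ℚ) ^ (n + 1) = (k : ℚ) := by
      rw [hm]
      field_simp
    have hZ : m * (p : ℤ) ^ (n + 1) = k := by exact_mod_cast hq
    rw [← hZ]
    ring
  · rintro ⟨m, rfl⟩
    refine ⟨m, ?_⟩
    rw [zsmul_eq_mul, zsmul_eq_mul]
    push_cast
    field_simp
end Prufer2

lemma pruferGen_covers {p : ℕ} (hp : p ≠ 0) (x : PruferGroup p) :
    ∃ n, ∃ k : ℤ, k • pruferGen p hp n = x := by
  obtain ⟨y, hy⟩ := x
  obtain ⟨n, hn⟩ := hy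
  obtain ⟨q, rfl⟩ := QuotientAddGroup.mk_surjective y
  have hps : ((p : ℚ) ^ n) ≠ 0 := pow_ne_zero _ (Nat.cast_ne_zero.mpr hp)
  have hn' : ((↑((p ^ n : ℕ) • q) : AddCircle (1 : ℚ))) = 0 := by
    rw [AddCircle.coe_nsmul]
    exact hn
  rw [AddCircle.coe_eq_zero_iff] at hn'
  obtain ⟨m, hm⟩ := hn'
  rw [zsmul_eq_mul, mul_one, nsmul_eq_mul] at hm
  -- hm : (m : ℚ) = (p^n : ℕ) * q
  cases n with
  | zero =>
    refine ⟨0, 0, ?_⟩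
    apply Subtype.ext
    rw [zero_smul]
    show (0 : AddCircle (1 : ℚ)) = ↑q
    symm
    rw [AddCircle.coe_eq_zero_iff]
    exact ⟨m, by rw [zsmul_eq_mul, mul_one, hm]; push_cast; ring⟩
  | succ n' =>
    refine ⟨n', m, ?_⟩
    apply Subtype.ext
    rw [AddSubgroup.coe_zsmul]
    show m • ((((((p : ℚ) ^ (n' + 1))⁻¹) : ℚ)) : AddCircle (1 : ℚ)) = ↑q
    rw [← AddCircle.coe_zsmul]
    congr 1
    rw [zsmul_eq_mul]
    have hq : q = (m : ℚ) / (p : ℚ) ^ (n' + 1) := by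
      rw [hm]
      push_cast
      field_simp
    rw [hq]
    field_simp

section Main
variable {A : Type*} [AddCommGroup A]

theorem abelian_prufer [Nontrivial A]
    (hnc : ∀ a : A, AddSubgroup.zmultiples a ≠ ⊤)
    (hA : ∀ K L : AddSubgroup A, K ≠ ⊤ → L ≠ ⊤ → K ⊔ L ≠ ⊤) :
    ∃ p : ℕ, p.Prime ∧ Nonempty (A ≃+ PruferGroup p) := by
  classical
  have hdivp : ∀ {p : ℕ}, p.Prime → ∀ x : A, ∃ y : A, (p : ℤ) • y = x :=
    fun hp x => div_by_prime hnc hA hp x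
  have hdiv : ∀ z : ℤ, z ≠ 0 → ∀ x : A, ∃ y : A, z • y = x :=
    fun z hz x => div_by_int (fun hp x => hdivp hp x) z hz x
  by_cases htor : ∃ a : A, a ≠ 0 ∧ ∃ n : ℕ, 0 < n ∧ n • a = 0
  · -- torsion case
    obtain ⟨t, ht0, n, hn, hnt⟩ := htor
    have hfin : IsOfFinAddOrder t := isOfFinAddOrder_iff_nsmul_eq_zero.mpr ⟨n, hn, hnt⟩
    set m := addOrderOf t with hmdef
    have hmpos : 0 < m := hfin.addOrderOf_pos
    have hm1 : m ≠ 1 := fun h => ht0 (AddMonoid.addOrderOf_eq_one_iff.mp h)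
    set p := m.minFac with hpdef
    have hp : p.Prime := Nat.minFac_prime hm1
    refine ⟨p, hp, ?_⟩
    set u0 : A := (m / p) • t with hu0def
    have hpu0 : (p : ℕ) • u0 = 0 := by
      rw [hu0def, smul_smul, Nat.mul_div_cancel' (Nat.minFac_dvd m)]
      exact addOrderOf_nsmul_eq_zero t
    have hu0 : u0 ≠ 0 := by
      intro h
      have hdvd : m ∣ m / p := addOrderOf_dvd_of_nsmul_eq_zero h
      have h1 : 0 < m / p := Nat.div_pos (Nat.minFac_le hmpos) hp.pos
      have h2 : m / p < m := Nat.div_lt_self hmpos hp.one_lt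
      exact absurd (Nat.le_of_dvd h1 hdvd) (by omega)
    -- the chain
    choose f hf using fun x : A => hdivp hp x
    set u : ℕ → A := fun n => f^[n] u0 with hudef
    have hu : ∀ n, (p : ℤ) • u (n + 1) = u n := by
      intro n
      rw [hudef]
      simp only [Function.iterate_succ_apply']
      exact hf _
    have hbase : u 0 = u0 := rfl
    have hA1 : ∀ n, (p : ℤ) ^ n • u n = u0 := by
      intro n
      have := chain_pow' hu (Nat.zero_le n)
      simpa [hbase] using this
    have hpow0 : ∀ n, (p : ℤ) ^ (n + 1) • u n = 0 := by
      intro n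
      rw [pow_succ', mul_smul, hA1 n, natCast_zsmul]
      exact hpu0
    have ov : ∀ (n : ℕ) (k : ℤ), k • u n = 0 ↔ ((p : ℤ)) ^ (n + 1) ∣ k := by
      intro n k
      constructor
      · intro hk
        have hord : addOrderOf (u n) = p ^ (n + 1) := by
          have hnp : ((p : ℕ) ^ (n + 1)) • u n = 0 := by
            have h := hpow0 n
            rw [show ((p : ℤ)) ^ (n + 1) = ((p ^ (n + 1) : ℕ) : ℤ) by push_cast; ring,
              natCast_zsmul] at h
            exact h
          have h1 : addOrderOf (u n) ∣ p ^ (n + 1) := addOrderOf_dvd_of_nsmul_eq_zero hnp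
          obtain ⟨j, hj, hje⟩ := (Nat.dvd_prime_pow hp).mp h1
          rcases eq_or_lt_of_le hj with rfl | hjlt
          · exact hje
          · exfalso
            have hjn : j ≤ n := by omega
            have h2 : addOrderOf (u n) ∣ p ^ n := hje ▸ pow_dvd_pow p hjn
            have h3 : ((p : ℕ) ^ n) • u n = 0 := addOrderOf_dvd_iff_nsmul_eq_zero.mp h2
            have h4 : (p : ℤ) ^ n • u n = 0 := by
              rw [show ((p : ℤ)) ^ n = ((p ^ n : ℕ) : ℤ) by push_cast; ring, natCast_zsmul]
              exact h3
            rw [hA1 n] at h4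
            exact hu0 h4
        have := addOrderOf_dvd_iff_zsmul_eq_zero.mpr hk
        rw [hord] at this
        push_cast at this
        exact this
      · rintro ⟨c, rfl⟩
        rw [mul_comm, mul_smul, hpow0, smul_zero]
    -- the union subgroup
    set D : AddSubgroup A := ⨆ n, AddSubgroup.zmultiples (u n) with hDdef
    have hmono : Monotone (fun n => AddSubgroup.zmultiples (u n)) := by
      apply monotone_nat_of_le_succ
      intro n
      exact zmultiples_le' (AddSubgroup.mem_zmultiples_iff.mpr ⟨(p : ℤ), hu n⟩)
    have hmemD : ∀ x : A, x ∈ D ↔ ∃ n, ∃ k : ℤ, k • u n = x := by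
      intro x
      rw [hDdef, AddSubgroup.mem_iSup_of_directed hmono.directed_le]
      simp only [AddSubgroup.mem_zmultiples_iff]
    have hDdiv : ∀ z : ℤ, z ≠ 0 → ∀ a ∈ D, ∃ b ∈ D, z • b = a := by
      have hnatdiv : ∀ m0 : ℕ, m0 ≠ 0 → ∀ a ∈ D, ∃ b ∈ D, (m0 : ℤ) • b = a := by
        intro m0 hm0 a haD
        obtain ⟨n, k, hk⟩ := (hmemD a).mp haD
        set e := m0.factorization p with hedef
        set m' := m0 / p ^ e with hm'def
        have heq : p ^ e * m' = m0 := Nat.ordProj_mul_ordCompl_eq_self m0 p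
        have hm'nd : ¬ p ∣ m' := Nat.not_dvd_ordCompl hp hm0
        have hcop : IsCoprime (m' : ℤ) ((p : ℤ) ^ (n + 1)) := by
          have h1 : Nat.Coprime m' (p ^ (n + 1)) :=
            (Nat.Coprime.pow_right _ (((Nat.Prime.coprime_iff_not_dvd hp).2 hm'nd).symm))
          have := Nat.isCoprime_iff_coprime.mpr h1
          push_cast at this
          exact this
        obtain ⟨α, β, hαβ⟩ := hcop
        refine ⟨(α * k) • u (n + e), (hmemD _).mpr ⟨n + e, α * k, rfl⟩, ?_⟩
        have hstep1 : (p : ℤ) ^ e • ((α * k) • u (n + e)) = (α * k) • u n := by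
          rw [smul_comm, chain_pow hu n e]
        have hstep2 : (m' : ℤ) • ((α * k) • u n) = k • u n := by
          rw [smul_smul]
          have hrw : (m' : ℤ) * (α * k) = k + (-(β * k)) * (p : ℤ) ^ (n + 1) := by
            linear_combination k * hαβ
          rw [hrw, add_smul, mul_smul, hpow0, smul_zero, add_zero]
        calc (m0 : ℤ) • ((α * k) • u (n + e))
            = ((m' : ℤ) * (p : ℤ) ^ e) • ((α * k) • u (n + e)) := by
              rw [← heq]; push_cast; ring_nf
          _ = (m' : ℤ) • ((p : ℤ) ^ e • ((α * k) • u (n + e))) := by rw [mul_smul]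
          _ = (m' : ℤ) • ((α * k) • u n) := by rw [hstep1]
          _ = k • u n := hstep2
          _ = a := hk
      intro z hz a haD
      rcases Int.natAbs_eq z with hz' | hz'
      · obtain ⟨b, hbD, hb⟩ := hnatdiv z.natAbs (by simpa using hz) a haD
        exact ⟨b, hbD, by rw [hz']; exact hb⟩
      · obtain ⟨b, hbD, hb⟩ := hnatdiv z.natAbs (by simpa using hz) a haD
        exact ⟨-b, D.neg_mem hbD, by rw [hz', neg_smul, smul_neg, neg_neg]; exact hb⟩
    have hD0 : D ≠ ⊥ := by
      intro h
      have : u0 ∈ D := (hmemD u0).mpr ⟨0, 1, one_smul _ _⟩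
      rw [h, AddSubgroup.mem_bot] at this
      exact hu0 this
    have htopD : D = ⊤ := divisible_subgroup_eq_top hA D hDdiv hD0
    have tv : ∀ b : A, ∃ n, ∃ k : ℤ, k • u n = b := by
      intro b
      exact (hmemD b).mp (htopD ▸ AddSubgroup.mem_top b)
    exact prufer_transfer u (pruferGen p hp.ne_zero) hu (pruferGen_chain hp.ne_zero) ov
      (pruferGen_zsmul_eq_zero_iff hp.ne_zero) tv (pruferGen_covers hp.ne_zero)
  · -- torsion-free case : derive a contradiction
    exfalso
    push_neg at htor
    have hFz : ∀ a : A, a ≠ 0 → ∀ z : ℤ, z ≠ 0 → z • a ≠ 0 := by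
      intro a ha z hz hza
      have hnat : (z.natAbs : ℤ) • a = 0 := by
        rcases Int.natAbs_eq z with h | h
        · rw [← h]; exact hza
        · rw [h, neg_smul] at hza
          rw [← neg_neg ((z.natAbs : ℤ) • a), hza, neg_zero]
      rw [natCast_zsmul] at hnat
      exact htor a ha z.natAbs (by simpa using hz) hnat
    obtain ⟨x0, hx0⟩ := exists_ne (0 : A)
    -- factorial chain
    set x : ℕ → A := fun n => Nat.rec x0
      (fun n xn => Classical.choose (hdiv ((n + 1 : ℕ) : ℤ)
        (by exact_mod_cast Nat.succ_ne_zero n) xn)) n with hxdef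
    have hx0' : x 0 = x0 := rfl
    have hstep : ∀ n : ℕ, ((n + 1 : ℕ) : ℤ) • x (n + 1) = x n := by
      intro n
      exact Classical.choose_spec (hdiv ((n + 1 : ℕ) : ℤ)
        (by exact_mod_cast Nat.succ_ne_zero n) (x n))
    have fprod : ∀ n d : ℕ, (∏ j ∈ Finset.Ioc n (n + d), (j : ℤ)) • x (n + d) = x n := by
      intro n d
      induction d with
      | zero => simp
      | succ d ih =>
        rw [show n + (d + 1) = (n + d) + 1 from rfl,
          Finset.prod_Ioc_succ_top (by omega : n ≤ n + d), mul_smul, hstep (n + d), ih]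
    -- the union subgroup Q is all of A
    set Q : AddSubgroup A := ⨆ n, AddSubgroup.zmultiples (x n) with hQdef
    have hmono : Monotone (fun n => AddSubgroup.zmultiples (x n)) := by
      apply monotone_nat_of_le_succ
      intro n
      exact zmultiples_le' (AddSubgroup.mem_zmultiples_iff.mpr ⟨((n + 1 : ℕ) : ℤ), hstep n⟩)
    have hmemQ : ∀ a : A, a ∈ Q ↔ ∃ n, ∃ k : ℤ, k • x n = a := by
      intro a
      rw [hQdef, AddSubgroup.mem_iSup_of_directed hmono.directed_le]
      simp only [AddSubgroup.mem_zmultiples_iff]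
    have hQdiv : ∀ z : ℤ, z ≠ 0 → ∀ a ∈ Q, ∃ b ∈ Q, z • b = a := by
      have hnatdiv : ∀ m0 : ℕ, m0 ≠ 0 → ∀ a ∈ Q, ∃ b ∈ Q, (m0 : ℤ) • b = a := by
        intro m0 hm0 a haQ
        obtain ⟨n, k, hk⟩ := (hmemQ a).mp haQ
        set i := m0 * (n / m0 + 1) with hidef
        have hm0pos : 0 < m0 := Nat.pos_of_ne_zero hm0
        have hi1 : n < i := by
          rw [hidef, Nat.mul_add, Nat.mul_one]
          have := Nat.div_add_mod n m0
          have := Nat.mod_lt n hm0pos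
          omega
        have hi2 : i ≤ n + m0 := by
          rw [hidef, Nat.mul_add, Nat.mul_one]
          have := Nat.div_mul_le_self n m0
          have := Nat.mul_div_le n m0
          omega
        have hdvdi : (m0 : ℤ) ∣ (i : ℤ) := Int.natCast_dvd_natCast.mpr ⟨n / m0 + 1, hidef⟩
        have hdvdP : (m0 : ℤ) ∣ ∏ j ∈ Finset.Ioc n (n + m0), (j : ℤ) :=
          dvd_trans hdvdi (Finset.dvd_prod_of_mem _ (Finset.mem_Ioc.mpr ⟨hi1, hi2⟩))
        obtain ⟨tq, htq⟩ := hdvdP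
        refine ⟨(k * tq) • x (n + m0), (hmemQ _).mpr ⟨n + m0, k * tq, rfl⟩, ?_⟩
        calc (m0 : ℤ) • (k * tq) • x (n + m0)
            = k • (((m0 : ℤ) * tq) • x (n + m0)) := by
              rw [smul_smul, smul_smul]; ring_nf
          _ = k • ((∏ j ∈ Finset.Ioc n (n + m0), (j : ℤ)) • x (n + m0)) := by rw [← htq]
          _ = k • x n := by rw [fprod n m0]
          _ = a := hk
      intro z hz a haQ
      rcases Int.natAbs_eq z with hz' | hz'
      · obtain ⟨b, hbQ, hb⟩ := hnatdiv z.natAbs (by simpa using hz) a haQ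
        exact ⟨b, hbQ, by rw [hz']; exact hb⟩
      · obtain ⟨b, hbQ, hb⟩ := hnatdiv z.natAbs (by simpa using hz) a haQ
        exact ⟨-b, Q.neg_mem hbQ, by rw [hz', neg_smul, smul_neg, neg_neg]; exact hb⟩
    have hQ0 : Q ≠ ⊥ := by
      intro h
      have : x0 ∈ Q := (hmemQ x0).mpr ⟨0, 1, one_smul _ _⟩
      rw [h, AddSubgroup.mem_bot] at this
      exact hx0 this
    have htopQ : Q = ⊤ := divisible_subgroup_eq_top hA Q hQdiv hQ0
    -- the two proper subgroups
    set K : AddSubgroup A :=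
      { carrier := {a | ∃ k : ℕ, ((2 : ℤ) ^ k) • a ∈ AddSubgroup.zmultiples x0}
        zero_mem' := ⟨0, by rw [smul_zero]; exact AddSubgroup.zero_mem _⟩
        add_mem' := by
          rintro a b ⟨k1, hk1⟩ ⟨k2, hk2⟩
          refine ⟨k1 + k2, ?_⟩
          rw [smul_add]
          refine AddSubgroup.add_mem _ ?_ ?_
          · rw [pow_add, mul_comm, mul_smul]
            exact AddSubgroup.zsmul_mem _ hk1 _
          · rw [pow_add, mul_smul]
            exact AddSubgroup.zsmul_mem _ hk2 _
        neg_mem' := by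
          rintro a ⟨k1, hk1⟩
          exact ⟨k1, by rw [smul_neg]; exact AddSubgroup.neg_mem _ hk1⟩ } with hKdef
    set L : AddSubgroup A :=
      { carrier := {a | ∃ mm : ℕ, Odd mm ∧ ((mm : ℤ)) • a ∈ AddSubgroup.zmultiples x0}
        zero_mem' := ⟨1, odd_one, by rw [smul_zero]; exact AddSubgroup.zero_mem _⟩
        add_mem' := by
          rintro a b ⟨m1, hm1o, hm1⟩ ⟨m2, hm2o, hm2⟩
          refine ⟨m1 * m2, hm1o.mul hm2o, ?_⟩
          rw [smul_add]
          refine AddSubgroup.add_mem _ ?_ ?_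
          · rw [Nat.cast_mul m1 m2, mul_comm, mul_smul]
            exact AddSubgroup.zsmul_mem _ hm1 _
          · rw [Nat.cast_mul m1 m2, mul_smul]
            exact AddSubgroup.zsmul_mem _ hm2 _
        neg_mem' := by
          rintro a ⟨m1, hm1o, hm1⟩
          exact ⟨m1, hm1o, by rw [smul_neg]; exact AddSubgroup.neg_mem _ hm1⟩ } with hLdef
    have hmemK : ∀ a : A, a ∈ K ↔ ∃ k : ℕ, ((2 : ℤ) ^ k) • a ∈ AddSubgroup.zmultiples x0 :=
      fun a => Iff.rfl
    have hmemL : ∀ a : A,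
        a ∈ L ↔ ∃ mm : ℕ, Odd mm ∧ ((mm : ℤ)) • a ∈ AddSubgroup.zmultiples x0 :=
      fun a => Iff.rfl
    -- small products
    have hx2 : (2 : ℤ) • x 2 = x 0 := by
      have := fprod 0 2
      rw [show (0 : ℕ) + 2 = 2 from rfl] at this
      rw [show (∏ j ∈ Finset.Ioc (0:ℕ) 2, (j : ℤ)) = 2 from by decide] at this
      exact this
    have hx3 : (6 : ℤ) • x 3 = x 0 := by
      have := fprod 0 3
      rw [show (0 : ℕ) + 3 = 3 from rfl] at this
      rw [show (∏ j ∈ Finset.Ioc (0:ℕ) 3, (j : ℤ)) = 6 from by decide] at this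
      exact this
    -- K and L are proper
    have hx3ne : x 3 ≠ 0 := by
      intro h
      apply hx0
      rw [← hx0', ← hx3, h, smul_zero]
    have hx2ne : x 2 ≠ 0 := by
      intro h
      apply hx0
      rw [← hx0', ← hx2, h, smul_zero]
    have hKt : K ≠ ⊤ := by
      intro h
      have : x 3 ∈ K := h ▸ AddSubgroup.mem_top (x 3)
      obtain ⟨k, hk⟩ := (hmemK _).mp this
      obtain ⟨c, hc⟩ := AddSubgroup.mem_zmultiples_iff.mp hk
      rw [← hx0', ← hx3, smul_smul] at hc
      have heq0 : ((2 : ℤ) ^ k - c * 6) • x 3 = 0 := by rw [sub_smul, hc, sub_self]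
      have hne : (2 : ℤ) ^ k - c * 6 = 0 := by
        by_contra hne
        exact hFz (x 3) hx3ne _ hne heq0
      have h3dvd : (3 : ℤ) ∣ (2 : ℤ) ^ k := ⟨c * 2, by linarith [hne]⟩
      have := Int.prime_three.dvd_of_dvd_pow h3dvd
      norm_num at this
    have hLt : L ≠ ⊤ := by
      intro h
      have : x 2 ∈ L := h ▸ AddSubgroup.mem_top (x 2)
      obtain ⟨mm, hmmo, hmm⟩ := (hmemL _).mp this
      obtain ⟨c, hc⟩ := AddSubgroup.mem_zmultiples_iff.mp hmm
      rw [← hx0', ← hx2, smul_smul] at hc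
      have heq0 : ((mm : ℤ) - c * 2) • x 2 = 0 := by rw [sub_smul, hc, sub_self]
      have hne : (mm : ℤ) - c * 2 = 0 := by
        by_contra hne
        exact hFz (x 2) hx2ne _ hne heq0
      have : Even (mm : ℤ) := ⟨c, by linarith [hne]⟩
      rw [Int.even_coe_nat] at this
      exact ((Nat.not_even_iff_odd.mpr hmmo)) this
    -- but K ⊔ L = ⊤
    apply hA K L hKt hLt
    rw [AddSubgroup.eq_top_iff']
    intro a
    obtain ⟨n, k, hk⟩ := (hmemQ a).mp (htopQ ▸ AddSubgroup.mem_top a)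
    set d : ℕ := ∏ j ∈ Finset.Ioc 0 n, j with hddef
    have hd0 : d ≠ 0 := by
      rw [hddef]
      exact Finset.prod_ne_zero_iff.mpr (fun j hj => ((Finset.mem_Ioc.mp hj).1).ne')
    have hda : (d : ℤ) • a ∈ AddSubgroup.zmultiples x0 := by
      have hfp := fprod 0 n
      rw [Nat.zero_add] at hfp
      have hdx : (d : ℤ) • x n = x 0 := by
        rw [hddef, Nat.cast_prod]
        exact hfp
      rw [← hk, smul_smul, mul_comm, ← smul_smul, hdx, hx0']
      exact AddSubgroup.zsmul_mem _ (AddSubgroup.mem_zmultiples x0) k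
    set e := d.factorization 2 with hedef
    set m' := d / 2 ^ e with hm'def
    have heq : 2 ^ e * m' = d := Nat.ordProj_mul_ordCompl_eq_self d 2
    have hm'nd : ¬ 2 ∣ m' := Nat.not_dvd_ordCompl Nat.prime_two hd0
    have hm'odd : Odd m' := Nat.odd_iff.mpr (Nat.two_dvd_ne_zero.mp hm'nd)
    have hKmem : (m' : ℤ) • a ∈ K := by
      refine (hmemK _).mpr ⟨e, ?_⟩
      rw [smul_smul, show (2 : ℤ) ^ e * (m' : ℤ) = ((2 ^ e * m' : ℕ) : ℤ) by push_cast; ring,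
        heq]
      exact hda
    have hLmem : ((2 : ℤ) ^ e) • a ∈ L := by
      refine (hmemL _).mpr ⟨m', hm'odd, ?_⟩
      rw [smul_smul, show (m' : ℤ) * (2 : ℤ) ^ e = ((2 ^ e * m' : ℕ) : ℤ) by push_cast; ring,
        heq]
      exact hda
    have hcop : IsCoprime ((2 : ℤ) ^ e) ((m' : ℤ)) := by
      have h2 : Nat.Coprime (2 ^ e) m' :=
        Nat.Coprime.pow_left _ ((Nat.Prime.coprime_iff_not_dvd Nat.prime_two).2 hm'nd)
      have := Nat.isCoprime_iff_coprime.mpr h2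
      push_cast at this
      exact this
    obtain ⟨α, β, hαβ⟩ := hcop
    have hsplit : a = β • ((m' : ℤ) • a) + α • (((2 : ℤ) ^ e) • a) := by
      rw [smul_smul, smul_smul, ← add_smul]
      calc a = (1 : ℤ) • a := (one_smul ℤ a).symm
        _ = (β * (m' : ℤ) + α * (2 : ℤ) ^ e) • a := by
            rw [show β * (m' : ℤ) + α * (2 : ℤ) ^ e = 1 by linarith [hαβ]]
    rw [hsplit]
    exact AddSubgroup.add_mem _
      (AddSubgroup.mem_sup_left (AddSubgroup.zsmul_mem _ hKmem β))
      (AddSubgroup.mem_sup_right (AddSubgroup.zsmul_mem _ hLmem α))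
end Main


/-- A group is quasicyclic of type `p` if it is isomorphic to the Prüfer `p`-group. -/
def IsQuasicyclic (p : ℕ) (G : Type*) [Group G] : Prop :=
  Nonempty (G ≃* Multiplicative (PruferGroup p))

/-- Let `G` be a soluble group which is not finitely generated and such that
`G ≠ ⟨K, L⟩` for any proper subgroups `K, L`. Then `G/[G,G]` is a quasicyclic
`p`-group for some prime `p`. -/
theorem abelianization_quasicyclic_of_not_join {G : Type*} [Group G] [Group.IsSolvable G]
    (hfg : ¬ Group.FG G)
    (h : ∀ K L : Subgroup G, K ≠ ⊤ → L ≠ ⊤ → K ⊔ L ≠ ⊤) :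
    ∃ p : ℕ, p.Prime ∧ IsQuasicyclic p (Abelianization G) := by
  classical
  -- the commutator subgroup is proper
  have hcomm : commutator G ≠ ⊤ := by
    intro hc
    have hds : ∀ n, derivedSeries G n = ⊤ := by
      intro n
      induction n with
      | zero => rfl
      | succ n ih => rw [derivedSeries_succ, ih, ← commutator_def]; exact hc
    obtain ⟨n, hn⟩ := Group.IsSolvable.solvable (G := G)
    rw [hds n] at hn
    have hsub : Subsingleton G := by
      constructor
      intro a b
      have ha : a ∈ (⊥ : Subgroup G) := hn ▸ Subgroup.mem_top a
      have hb : b ∈ (⊥ : Subgroup G) := hn ▸ Subgroup.mem_top b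
      rw [Subgroup.mem_bot] at ha hb
      rw [ha, hb]
    haveI : Finite G := Finite.of_subsingleton
    exact hfg inferInstance
  have hker : ∀ g : G, Abelianization.of g = 1 ↔ g ∈ commutator G := fun g =>
    QuotientGroup.eq_one_iff g
  have hofsurj : Function.Surjective (fun g : G => Abelianization.of g) := fun y =>
    QuotientGroup.induction_on y fun g => ⟨g, rfl⟩
  haveI : Nontrivial (Abelianization G) := by
    obtain ⟨g, hg⟩ : ∃ g : G, g ∉ commutator G := by
      by_contra hc
      push_neg at hc
      exact hcomm (((Subgroup.eq_top_iff' _).mpr hc))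
    exact ⟨Abelianization.of g, 1, fun he => hg ((hker g).mp he)⟩
  -- the abelianization is not cyclic
  have hncyc : ∀ y : Abelianization G, Subgroup.zpowers y ≠ ⊤ := by
    intro y hy
    obtain ⟨g, rfl⟩ := hofsurj y
    have hzg : Subgroup.zpowers g ≠ ⊤ := by
      intro hz
      apply hfg
      rw [Group.fg_iff]
      exact ⟨{g}, by rw [← Subgroup.zpowers_eq_closure]; exact hz, Set.finite_singleton g⟩
    apply h (Subgroup.zpowers g) (commutator G) hzg hcomm
    rw [Subgroup.eq_top_iff']
    intro a
    have hmem : Abelianization.of a ∈ Subgroup.zpowers (Abelianization.of g) :=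
      hy ▸ Subgroup.mem_top _
    obtain ⟨k, hk⟩ := Subgroup.mem_zpowers_iff.mp hmem
    have h1 : Abelianization.of (g ^ (-k) * a) = 1 := by
      rw [map_mul, map_zpow, ← hk]
      group
    have h2 : g ^ (-k) * a ∈ commutator G := (hker _).mp h1
    have h3 : a = g ^ k * (g ^ (-k) * a) := by group
    rw [h3]
    exact Subgroup.mul_mem_sup (Subgroup.zpow_mem _ (Subgroup.mem_zpowers g) k) h2
  -- the join condition descends to the abelianization
  have hsupAb : ∀ K L : Subgroup (Abelianization G), K ≠ ⊤ → L ≠ ⊤ → K ⊔ L ≠ ⊤ := by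
    intro K L hK hL hsup
    have hcK : Subgroup.comap Abelianization.of K ≠ ⊤ := by
      intro hc
      apply hK
      rw [Subgroup.eq_top_iff']
      intro y
      obtain ⟨gy, rfl⟩ := hofsurj y
      have : gy ∈ Subgroup.comap Abelianization.of K := hc ▸ Subgroup.mem_top gy
      exact this
    have hcL : Subgroup.comap Abelianization.of L ≠ ⊤ := by
      intro hc
      apply hL
      rw [Subgroup.eq_top_iff']
      intro y
      obtain ⟨gy, rfl⟩ := hofsurj y
      have : gy ∈ Subgroup.comap Abelianization.of L := hc ▸ Subgroup.mem_top gy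
      exact this
    apply h _ _ hcK hcL
    rw [Subgroup.eq_top_iff']
    intro a
    have hmem : Abelianization.of a ∈ K ⊔ L := hsup ▸ Subgroup.mem_top _
    obtain ⟨y, hy, z, hz, hyz⟩ := Subgroup.mem_sup.mp hmem
    obtain ⟨b, rfl⟩ := hofsurj y
    obtain ⟨c, rfl⟩ := hofsurj z
    have h1 : Abelianization.of ((b * c)⁻¹ * a) = 1 := by
      rw [map_mul, map_inv, map_mul, hyz]
      group
    have hr : (b * c)⁻¹ * a ∈ Subgroup.comap Abelianization.of K := by
      rw [Subgroup.mem_comap, h1]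
      exact K.one_mem
    have h3 : a = (b * c) * ((b * c)⁻¹ * a) := by group
    rw [h3]
    refine Subgroup.mul_mem _ ?_ (Subgroup.mem_sup_left hr)
    exact Subgroup.mul_mem_sup hy hz
  -- pass to the additive version
  have hnc : ∀ a : Additive (Abelianization G), AddSubgroup.zmultiples a ≠ ⊤ := by
    intro a hta
    apply hncyc a.toMul
    rw [Subgroup.eq_top_iff']
    intro y
    have : Additive.ofMul y ∈ AddSubgroup.zmultiples a := hta ▸ AddSubgroup.mem_top _
    obtain ⟨k, hk⟩ := AddSubgroup.mem_zmultiples_iff.mp this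
    refine Subgroup.mem_zpowers_iff.mpr ⟨k, ?_⟩
    have := congrArg Additive.toMul hk
    rw [toMul_zsmul] at this
    exact this
  have hAsup : ∀ K L : AddSubgroup (Additive (Abelianization G)),
      K ≠ ⊤ → L ≠ ⊤ → K ⊔ L ≠ ⊤ := by
    intro K L hK hL hsup
    set e := AddSubgroup.toSubgroup' (G := Abelianization G) with hedef
    apply hsupAb (e K) (e L)
    · intro hc
      apply hK
      have h1 : K = e.symm ⊤ := by rw [← hc, OrderIso.symm_apply_apply]
      rw [h1, OrderIso.map_top]
    · intro hc
      apply hL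
      have h1 : L = e.symm ⊤ := by rw [← hc, OrderIso.symm_apply_apply]
      rw [h1, OrderIso.map_top]
    · rw [← map_sup, hsup, OrderIso.map_top]
  haveI : Nontrivial (Additive (Abelianization G)) := ‹Nontrivial (Abelianization G)›
  obtain ⟨p, hp, ⟨eqv⟩⟩ := abelian_prufer hnc hAsup
  exact ⟨p, hp, ⟨((MulEquiv.multiplicativeAdditive (Abelianization G)).symm).trans
    (AddEquiv.toMultiplicative eqv)⟩⟩
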